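/- The Krull dimension of the ring O_C[[X]] is at least 3. -/

import Mathlib

/-!
STATEMENT 17: The Krull dimension of `O_C[[X]]` is at least `3`, where `C` is an algebraically
closed field of characteristic `p`, complete with respect to a nontrivial nonarchimedean
absolute value, with valuation ring `O_C`.
-/

noncomputable section

/-- The valuation ring `O_C = {x : C | ‖x‖ ≤ 1}` of a nonarchimedean normed field. -/
def OC (C : Type) [NormedField C] (hna : IsNonarchimedean (norm : C → ℝ)) : Subring C where
  carrier := {x : C | ‖x‖ ≤ 1}
  mul_mem' := fun {a b} (ha : ‖a‖ ≤ 1) (hb : ‖b‖ ≤ 1) => by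
    have : ‖a * b‖ = ‖a‖ * ‖b‖ := norm_mul a b
    simp only [Set.mem_setOf_eq, this]
    nlinarith [norm_nonneg a, norm_nonneg b]
  one_mem' := by simp
  add_mem' := fun {a b} (ha : ‖a‖ ≤ 1) (hb : ‖b‖ ≤ 1) =>
    le_trans (hna a b) (max_le ha hb)
  zero_mem' := by simp
  neg_mem' := fun {a} (ha : ‖a‖ ≤ 1) => by simpa using ha

section Helpers

variable {C : Type} [NontriviallyNormedField C] (hna : IsNonarchimedean (norm : C → ℝ))
include hna
set_option linter.unusedSectionVars false

lemma st17_norm_sum_le {ι : Type} (s : Finset ι) (g : ι → C) {r : ℝ} (hr : 0 ≤ r)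
    (h : ∀ i ∈ s, ‖g i‖ ≤ r) : ‖∑ i ∈ s, g i‖ ≤ r := by
  classical
  induction s using Finset.cons_induction with
  | empty => simpa
  | cons a s ha ih =>
    rw [Finset.sum_cons]
    exact le_trans (hna _ _) (max_le (h a (Finset.mem_cons_self a s))
      (ih fun i hi => h i (Finset.mem_cons_of_mem hi)))

lemma st17_norm_le_add {x y : C} (h : ‖y‖ < ‖x‖) : ‖x‖ ≤ ‖x + y‖ := by
  have h2 := hna (x + y) (-y)
  simp only [add_neg_cancel_right, norm_neg] at h2
  rcases le_max_iff.1 h2 with h3 | h3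
  · exact h3
  · linarith

lemma st17_dominant {ι : Type} [DecidableEq ι] (s : Finset ι) (g : ι → C) (i : ι) (hi : i ∈ s)
    (hpos : 0 < ‖g i‖) (hdom : ∀ j ∈ s, j ≠ i → ‖g j‖ < ‖g i‖) :
    ‖g i‖ ≤ ‖∑ j ∈ s, g j‖ := by
  have hsum : ∑ j ∈ s, g j = g i + ∑ j ∈ s.erase i, g j := (Finset.add_sum_erase s g hi).symm
  rw [hsum]
  apply st17_norm_le_add hna
  rcases (s.erase i).eq_empty_or_nonempty with he | hne
  · simpa [he] using hpos
  · have hle : ∀ j ∈ s.erase i, ‖g j‖ ≤ (s.erase i).sup' hne (fun j => ‖g j‖) :=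
      fun j hj => Finset.le_sup' (fun j => ‖g j‖) hj
    have hlt : (s.erase i).sup' hne (fun j => ‖g j‖) < ‖g i‖ :=
      (Finset.sup'_lt_iff hne).mpr fun j hj =>
        hdom j (Finset.mem_of_mem_erase hj) (Finset.ne_of_mem_erase hj)
    refine lt_of_le_of_lt (st17_norm_sum_le hna _ _ ?_ hle) hlt
    exact (norm_nonneg (g hne.choose)).trans (Finset.le_sup' (fun j => ‖g j‖) hne.choose_spec)

lemma st17_argmax {r : ℝ} (hr0 : 0 < r) (hr1 : r < 1) (a : ℕ → ℝ) (ha0 : ∀ n, 0 ≤ a n)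
    (ha1 : ∀ n, a n ≤ 1) {i : ℕ} (hi : 0 < a i) :
    ∃ N, (∀ m, a m * r ^ m ≤ a N * r ^ N) ∧ (∀ k, k < N → a k * r ^ k < a N * r ^ N) := by
  classical
  set g : ℕ → ℝ := fun n => a n * r ^ n with hg
  have hg0 : ∀ n, 0 ≤ g n := fun n => mul_nonneg (ha0 n) (pow_nonneg hr0.le n)
  have htends : Filter.Tendsto g Filter.atTop (nhds 0) := by
    have h1 : Filter.Tendsto (fun n : ℕ => r ^ n) Filter.atTop (nhds 0) :=
      tendsto_pow_atTop_nhds_zero_of_lt_one hr0.le hr1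
    refine squeeze_zero hg0 (fun n => ?_) h1
    calc a n * r ^ n ≤ 1 * r ^ n :=
          mul_le_mul_of_nonneg_right (ha1 n) (pow_nonneg hr0.le n)
      _ = r ^ n := one_mul _
  have hgi : 0 < g i := mul_pos hi (pow_pos hr0 i)
  have hev : ∀ᶠ n in Filter.atTop, g n < g i := htends.eventually (gt_mem_nhds hgi)
  obtain ⟨M, hM⟩ := Filter.eventually_atTop.mp hev
  have hiM : i < M := by
    by_contra h
    exact absurd (hM i (le_of_not_gt h)) (lt_irrefl _)
  have hMne : (Finset.range M).Nonempty := ⟨i, Finset.mem_range.mpr hiM⟩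
  obtain ⟨n0, hn0mem, hn0⟩ := Finset.exists_mem_eq_sup' hMne g
  have hglob : ∀ m, g m ≤ g n0 := by
    intro m
    by_cases hm : m < M
    · exact hn0 ▸ Finset.le_sup' g (Finset.mem_range.mpr hm)
    · exact le_trans (hM m (le_of_not_gt hm)).le
        (hn0 ▸ Finset.le_sup' g (Finset.mem_range.mpr hiM))
  have hQ : ∃ n, ∀ m, g m ≤ g n := ⟨n0, hglob⟩
  refine ⟨Nat.find hQ, Nat.find_spec hQ, ?_⟩
  intro k hk
  have h := Nat.find_min hQ hk
  push_neg at h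
  obtain ⟨m, hm⟩ := h
  exact lt_of_lt_of_le hm (Nat.find_spec hQ m)

end Helpers

section Ideals

open PowerSeries

variable {C : Type} [NontriviallyNormedField C] (hna : IsNonarchimedean (norm : C → ℝ))

/-- The `n`-th coefficient of `f ∈ O_C[[X]]`, viewed as an element of `C`. -/
def st17c (f : PowerSeries ↥(OC C hna)) (n : ℕ) : C := ↑(PowerSeries.coeff n f)

lemma st17_mem_OC {x : C} : x ∈ OC C hna ↔ ‖x‖ ≤ 1 := Iff.rfl

lemma st17c_le_one (f : PowerSeries ↥(OC C hna)) (n : ℕ) :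
    ‖st17c hna f n‖ ≤ 1 := (st17_mem_OC hna).mp (PowerSeries.coeff n f).2

lemma st17c_add (f g : PowerSeries ↥(OC C hna)) (n : ℕ) :
    st17c hna (f + g) n = st17c hna f n + st17c hna g n := by
  unfold st17c; rw [map_add]; push_cast; ring

lemma st17c_mul (f g : PowerSeries ↥(OC C hna)) (n : ℕ) :
    st17c hna (f * g) n = ∑ p ∈ Finset.HasAntidiagonal.antidiagonal n, st17c hna f p.1 * st17c hna g p.2 := by
  unfold st17c
  rw [PowerSeries.coeff_mul]
  push_cast
  rfl

lemma st17c_mul_zero (f g : PowerSeries ↥(OC C hna)) :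
    st17c hna (f * g) 0 = st17c hna f 0 * st17c hna g 0 := by
  rw [st17c_mul]
  simp

lemma st17c_zero (n : ℕ) : st17c hna 0 n = 0 := by
  unfold st17c; simp

/-- `𝔭₁ = ⋃_{ϖ ∈ 𝔪_C} ϖ·O_C[[X]]`: power series with coefficients uniformly bounded away
from norm `1`. -/
def st17P1 : Ideal (PowerSeries ↥(OC C hna)) where
  carrier := {f | ∃ r : ℝ, 0 ≤ r ∧ r < 1 ∧ ∀ n, ‖st17c hna f n‖ ≤ r}
  zero_mem' := ⟨0, le_refl _, one_pos, fun n => by rw [st17c_zero]; simp⟩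
  add_mem' := by
    rintro f g ⟨r, hr0, hr1, hr⟩ ⟨t, ht0, ht1, ht⟩
    refine ⟨max r t, le_max_of_le_left hr0, max_lt hr1 ht1, fun n => ?_⟩
    rw [st17c_add]
    exact le_trans (hna _ _) (max_le_max (hr n) (ht n))
  smul_mem' := by
    rintro c f ⟨r, hr0, hr1, hr⟩
    refine ⟨r, hr0, hr1, fun n => ?_⟩
    rw [smul_eq_mul, st17c_mul]
    refine st17_norm_sum_le hna _ _ hr0 fun p hp => ?_
    rw [norm_mul]
    calc ‖st17c hna c p.1‖ * ‖st17c hna f p.2‖ ≤ 1 * r :=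
          mul_le_mul (st17c_le_one hna c p.1) (hr p.2) (norm_nonneg _) zero_le_one
      _ = r := one_mul r

/-- `𝔭_crys`: power series with all coefficients in `𝔪_C`. -/
def st17P2 : Ideal (PowerSeries ↥(OC C hna)) where
  carrier := {f | ∀ n, ‖st17c hna f n‖ < 1}
  zero_mem' := fun n => by rw [st17c_zero]; simp
  add_mem' := by
    intro f g hf hg n
    rw [st17c_add]
    exact lt_of_le_of_lt (hna _ _) (max_lt (hf n) (hg n))
  smul_mem' := by
    intro c f hf n
    rw [smul_eq_mul, st17c_mul]
    have hne : (Finset.HasAntidiagonal.antidiagonal n).Nonempty := ⟨(0, n), by simp⟩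
    set F : ℕ × ℕ → ℝ := fun p => ‖st17c hna c p.1 * st17c hna f p.2‖ with hF
    have h1 : ‖∑ p ∈ Finset.HasAntidiagonal.antidiagonal n, st17c hna c p.1 * st17c hna f p.2‖ ≤
        (Finset.HasAntidiagonal.antidiagonal n).sup' hne F := by
      refine st17_norm_sum_le hna _ _ ?_ (fun p hp => Finset.le_sup' F hp)
      exact (norm_nonneg _).trans (Finset.le_sup' F hne.choose_spec)
    refine lt_of_le_of_lt h1 ((Finset.sup'_lt_iff hne).mpr fun p hp => ?_)
    show ‖st17c hna c p.1 * st17c hna f p.2‖ < 1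
    rw [norm_mul]
    calc ‖st17c hna c p.1‖ * ‖st17c hna f p.2‖ ≤ 1 * ‖st17c hna f p.2‖ :=
          mul_le_mul_of_nonneg_right (st17c_le_one hna c p.1) (norm_nonneg _)
      _ = ‖st17c hna f p.2‖ := one_mul _
      _ < 1 := hf p.2

/-- The maximal ideal `𝔪 = (𝔪_C, X)`. -/
def st17P3 : Ideal (PowerSeries ↥(OC C hna)) where
  carrier := {f | ‖st17c hna f 0‖ < 1}
  zero_mem' := by rw [Set.mem_setOf_eq, st17c_zero]; simp
  add_mem' := by
    intro f g hf hg
    rw [Set.mem_setOf_eq, st17c_add]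
    exact lt_of_le_of_lt (hna _ _) (max_lt hf hg)
  smul_mem' := by
    intro c f hf
    rw [smul_eq_mul, Set.mem_setOf_eq, st17c_mul_zero, norm_mul]
    calc ‖st17c hna c 0‖ * ‖st17c hna f 0‖ ≤ 1 * ‖st17c hna f 0‖ :=
          mul_le_mul_of_nonneg_right (st17c_le_one hna c 0) (norm_nonneg _)
      _ = ‖st17c hna f 0‖ := one_mul _
      _ < 1 := hf

lemma st17_mem_P1 {f : PowerSeries ↥(OC C hna)} :
    f ∈ st17P1 hna ↔ ∃ r : ℝ, 0 ≤ r ∧ r < 1 ∧ ∀ n, ‖st17c hna f n‖ ≤ r := Iff.rfl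

lemma st17_mem_P2 {f : PowerSeries ↥(OC C hna)} :
    f ∈ st17P2 hna ↔ ∀ n, ‖st17c hna f n‖ < 1 := Iff.rfl

lemma st17_mem_P3 {f : PowerSeries ↥(OC C hna)} :
    f ∈ st17P3 hna ↔ ‖st17c hna f 0‖ < 1 := Iff.rfl

end Ideals

section Primes

open PowerSeries

variable {C : Type} [NontriviallyNormedField C] (hna : IsNonarchimedean (norm : C → ℝ))

lemma st17c_one : st17c hna (1 : PowerSeries ↥(OC C hna)) 0 = 1 := by
  unfold st17c; simp

lemma st17P3_prime : (st17P3 hna).IsPrime := by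
  rw [Ideal.isPrime_iff]
  constructor
  · intro h
    have h1 : (1 : PowerSeries ↥(OC C hna)) ∈ st17P3 hna := h ▸ Submodule.mem_top
    rw [st17_mem_P3, st17c_one] at h1
    simp at h1
  · intro f g hfg
    rw [st17_mem_P3, st17c_mul_zero, norm_mul] at hfg
    by_contra hcon
    push_neg at hcon
    obtain ⟨hf, hg⟩ := hcon
    rw [st17_mem_P3] at hf hg
    push_neg at hf hg
    nlinarith

lemma st17P2_prime : (st17P2 hna).IsPrime := by
  classical
  rw [Ideal.isPrime_iff]
  constructor
  · intro h
    have h1 : (1 : PowerSeries ↥(OC C hna)) ∈ st17P2 hna := h ▸ Submodule.mem_top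
    have := (st17_mem_P2 hna).mp h1 0
    rw [st17c_one] at this
    simp at this
  · intro f g hfg
    by_contra hcon
    push_neg at hcon
    obtain ⟨hf, hg⟩ := hcon
    rw [st17_mem_P2] at hf hg
    push_neg at hf hg
    set N := Nat.find hf with hN
    set M := Nat.find hg with hM
    have hNval : 1 ≤ ‖st17c hna f N‖ := Nat.find_spec hf
    have hMval : 1 ≤ ‖st17c hna g M‖ := Nat.find_spec hg
    have hNmin : ∀ k, k < N → ‖st17c hna f k‖ < 1 := fun k hk =>
      lt_of_not_ge (Nat.find_min hf hk)
    have hMmin : ∀ k, k < M → ‖st17c hna g k‖ < 1 := fun k hk =>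
      lt_of_not_ge (Nat.find_min hg hk)
    have hdom := st17_dominant hna (Finset.HasAntidiagonal.antidiagonal (N + M))
      (fun p => st17c hna f p.1 * st17c hna g p.2) (N, M)
      (Finset.HasAntidiagonal.mem_antidiagonal.mpr rfl)
      (by
        show (0:ℝ) < ‖st17c hna f N * st17c hna g M‖
        rw [norm_mul]; nlinarith)
      (by
        rintro ⟨k, l⟩ hp hne
        have hsum : k + l = N + M := Finset.HasAntidiagonal.mem_antidiagonal.mp hp
        show ‖st17c hna f k * st17c hna g l‖ < ‖st17c hna f N * st17c hna g M‖
        rw [norm_mul, norm_mul]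
        rcases lt_trichotomy k N with h | h | h
        · have h1 := hNmin k h
          have h2 := st17c_le_one hna g l
          have h3 := norm_nonneg (st17c hna f k)
          have h4 := norm_nonneg (st17c hna g l)
          nlinarith
        · exact absurd (Prod.ext h (by omega)) hne
        · have hl : l < M := by omega
          have h1 := hMmin l hl
          have h2 := st17c_le_one hna f k
          have h3 := norm_nonneg (st17c hna f k)
          have h4 := norm_nonneg (st17c hna g l)
          nlinarith)
    have hsum2 : ‖st17c hna f N * st17c hna g M‖ ≤ ‖st17c hna (f * g) (N + M)‖ := by
      rw [st17c_mul]
      exact hdom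
    have hlt := (st17_mem_P2 hna).mp hfg (N + M)
    rw [norm_mul] at hsum2
    nlinarith

set_option maxHeartbeats 2000000 in
lemma st17P1_prime : (st17P1 hna).IsPrime := by
  classical
  rw [Ideal.isPrime_iff]
  constructor
  · intro h
    have h1 : (1 : PowerSeries ↥(OC C hna)) ∈ st17P1 hna := h ▸ Submodule.mem_top
    obtain ⟨r, hr0, hr1, hr⟩ := (st17_mem_P1 hna).mp h1
    have := hr 0
    rw [st17c_one] at this
    simp at this
    linarith
  · intro f g hfg
    by_contra hcon
    push_neg at hcon
    obtain ⟨hf, hg⟩ := hcon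
    rw [st17_mem_P1] at hfg hf hg
    push_neg at hf hg
    obtain ⟨u, hu0, hu1, hu⟩ := hfg
    set u' : ℝ := max u (1/2) with hu'
    have hu'0 : (0:ℝ) < u' := lt_of_lt_of_le (by norm_num) (le_max_right _ _)
    have hu'1 : u' < 1 := max_lt hu1 (by norm_num)
    have huu' : u ≤ u' := le_max_left _ _
    set s : ℝ := Real.sqrt u' with hs
    have hss : s * s = u' := Real.mul_self_sqrt hu'0.le
    have hs0 : 0 < s := Real.sqrt_pos.mpr hu'0
    have hs1 : s < 1 := by nlinarith
    obtain ⟨i, hi⟩ := hf s hs0.le hs1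
    obtain ⟨j, hj⟩ := hg s hs0.le hs1
    have hai : 0 < ‖st17c hna f i‖ := lt_trans hs0 hi
    have hbj : 0 < ‖st17c hna g j‖ := lt_trans hs0 hj
    have hab : u' < ‖st17c hna f i‖ * ‖st17c hna g j‖ := by nlinarith
    have habpos : 0 < ‖st17c hna f i‖ * ‖st17c hna g j‖ := mul_pos hai hbj
    set ρ : ℝ := u' / (‖st17c hna f i‖ * ‖st17c hna g j‖) with hρ
    have hρ0 : 0 < ρ := div_pos hu'0 habpos
    have hρ1 : ρ < 1 := (div_lt_one habpos).mpr hab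
    set m : ℕ := i + j with hm
    set r : ℝ := ρ ^ (((m:ℝ) + 1)⁻¹) with hr
    have hr0 : 0 < r := Real.rpow_pos_of_pos hρ0 _
    have hr1 : r < 1 := Real.rpow_lt_one hρ0.le hρ1 (by positivity)
    have hrm : ρ < r ^ m := by
      have h1 : r ^ m = ρ ^ ((m : ℝ) * ((m:ℝ)+1)⁻¹) := by
        rw [hr, ← Real.rpow_natCast (ρ ^ (((m:ℝ) + 1)⁻¹)) m, ← Real.rpow_mul hρ0.le, mul_comm]
      have hlt : (m:ℝ) * ((m:ℝ)+1)⁻¹ < 1 := by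
        rw [← div_eq_mul_inv]
        rw [div_lt_one (by positivity)]
        linarith [show (0:ℝ) ≤ (m:ℕ) from Nat.cast_nonneg m]
      calc ρ = ρ ^ (1:ℝ) := (Real.rpow_one ρ).symm
        _ < ρ ^ ((m:ℝ) * ((m:ℝ)+1)⁻¹) := Real.rpow_lt_rpow_of_exponent_gt hρ0 hρ1 hlt
        _ = r ^ m := h1.symm
    obtain ⟨N, hNmax, hNmin⟩ := st17_argmax hna hr0 hr1 (fun n => ‖st17c hna f n‖)
      (fun n => norm_nonneg _) (st17c_le_one hna f) (i := i) hai
    obtain ⟨M, hMmax, hMmin⟩ := st17_argmax hna hr0 hr1 (fun n => ‖st17c hna g n‖)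
      (fun n => norm_nonneg _) (st17c_le_one hna g) (i := j) hbj
    have hNpos : 0 < ‖st17c hna f N‖ := by
      have h1 := hNmax i
      have h2 : 0 < ‖st17c hna f i‖ * r ^ i := mul_pos hai (pow_pos hr0 i)
      nlinarith [pow_pos hr0 N, norm_nonneg (st17c hna f N)]
    have hMpos : 0 < ‖st17c hna g M‖ := by
      have h1 := hMmax j
      have h2 : 0 < ‖st17c hna g j‖ * r ^ j := mul_pos hbj (pow_pos hr0 j)
      nlinarith [pow_pos hr0 M, norm_nonneg (st17c hna g M)]
    have hrNM : (0:ℝ) < r ^ (N + M) := pow_pos hr0 _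
    have hdom := st17_dominant hna (Finset.HasAntidiagonal.antidiagonal (N + M))
      (fun p => st17c hna f p.1 * st17c hna g p.2) (N, M)
      (Finset.HasAntidiagonal.mem_antidiagonal.mpr rfl)
      (by
        show (0:ℝ) < ‖st17c hna f N * st17c hna g M‖
        rw [norm_mul]; exact mul_pos hNpos hMpos)
      (by
        rintro ⟨k, l⟩ hp hne
        have hsum : k + l = N + M := Finset.HasAntidiagonal.mem_antidiagonal.mp hp
        show ‖st17c hna f k * st17c hna g l‖ < ‖st17c hna f N * st17c hna g M‖
        rw [norm_mul, norm_mul]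
        have e1 : r ^ (N+M) = r ^ k * r ^ l := by rw [← pow_add, hsum]
        have e2 : r ^ (N+M) = r ^ N * r ^ M := pow_add r N M
        refine (mul_lt_mul_iff_left₀ hrNM).mp ?_
        rcases lt_trichotomy k N with h | h | h
        · have h1 : ‖st17c hna f k‖ * r ^ k < ‖st17c hna f N‖ * r ^ N := hNmin k h
          have h2 : ‖st17c hna g l‖ * r ^ l ≤ ‖st17c hna g M‖ * r ^ M := hMmax l
          calc ‖st17c hna f k‖ * ‖st17c hna g l‖ * r ^ (N+M)
              = (‖st17c hna f k‖ * r ^ k) * (‖st17c hna g l‖ * r ^ l) := by rw [e1]; ring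
            _ < (‖st17c hna f N‖ * r ^ N) * (‖st17c hna g M‖ * r ^ M) := by
                have hx0 : 0 ≤ ‖st17c hna f k‖ * r ^ k :=
                  mul_nonneg (norm_nonneg _) (pow_nonneg hr0.le _)
                have hy0 : 0 ≤ ‖st17c hna g l‖ * r ^ l :=
                  mul_nonneg (norm_nonneg _) (pow_nonneg hr0.le _)
                have hY : 0 < ‖st17c hna g M‖ * r ^ M := mul_pos hMpos (pow_pos hr0 _)
                nlinarith
            _ = ‖st17c hna f N‖ * ‖st17c hna g M‖ * r ^ (N+M) := by rw [e2]; ring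
        · exact absurd (Prod.ext h (by omega)) hne
        · have hl : l < M := by omega
          have h1 : ‖st17c hna g l‖ * r ^ l < ‖st17c hna g M‖ * r ^ M := hMmin l hl
          have h2 : ‖st17c hna f k‖ * r ^ k ≤ ‖st17c hna f N‖ * r ^ N := hNmax k
          calc ‖st17c hna f k‖ * ‖st17c hna g l‖ * r ^ (N+M)
              = (‖st17c hna f k‖ * r ^ k) * (‖st17c hna g l‖ * r ^ l) := by rw [e1]; ring
            _ < (‖st17c hna f N‖ * r ^ N) * (‖st17c hna g M‖ * r ^ M) := by
                have hx0 : 0 ≤ ‖st17c hna f k‖ * r ^ k :=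
                  mul_nonneg (norm_nonneg _) (pow_nonneg hr0.le _)
                have hy0 : 0 ≤ ‖st17c hna g l‖ * r ^ l :=
                  mul_nonneg (norm_nonneg _) (pow_nonneg hr0.le _)
                have hX : 0 < ‖st17c hna f N‖ * r ^ N := mul_pos hNpos (pow_pos hr0 _)
                nlinarith
            _ = ‖st17c hna f N‖ * ‖st17c hna g M‖ * r ^ (N+M) := by rw [e2]; ring)
    have hsum2 : ‖st17c hna f N‖ * ‖st17c hna g M‖ ≤ ‖st17c hna (f * g) (N + M)‖ := by
      rw [st17c_mul]
      rw [norm_mul] at hdom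
      exact hdom
    -- final contradiction
    have hu0' : 0 ≤ u := le_trans (norm_nonneg _) (hu 0)
    have h4 : u' < (‖st17c hna f i‖ * r ^ i) * (‖st17c hna g j‖ * r ^ j) := by
      have heq : (‖st17c hna f i‖ * ‖st17c hna g j‖) * ρ = u' := by
        rw [hρ]; field_simp
      have h5 : (‖st17c hna f i‖ * ‖st17c hna g j‖) * ρ
          < (‖st17c hna f i‖ * ‖st17c hna g j‖) * r ^ m := (mul_lt_mul_iff_right₀ habpos).mpr hrm
      have e3 : r ^ m = r ^ i * r ^ j := by rw [hm, pow_add]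
      calc u' = (‖st17c hna f i‖ * ‖st17c hna g j‖) * ρ := heq.symm
        _ < (‖st17c hna f i‖ * ‖st17c hna g j‖) * r ^ m := h5
        _ = (‖st17c hna f i‖ * r ^ i) * (‖st17c hna g j‖ * r ^ j) := by rw [e3]; ring
    have h6 : (‖st17c hna f i‖ * r ^ i) * (‖st17c hna g j‖ * r ^ j)
        ≤ (‖st17c hna f N‖ * r ^ N) * (‖st17c hna g M‖ * r ^ M) :=
      mul_le_mul (hNmax i) (hMmax j)
        (mul_nonneg (norm_nonneg _) (pow_nonneg hr0.le _))
        (mul_nonneg (norm_nonneg _) (pow_nonneg hr0.le _))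
    have h7 : (‖st17c hna f N‖ * r ^ N) * (‖st17c hna g M‖ * r ^ M)
        = (‖st17c hna f N‖ * ‖st17c hna g M‖) * r ^ (N + M) := by rw [pow_add]; ring
    have h8 : (‖st17c hna f N‖ * ‖st17c hna g M‖) * r ^ (N + M)
        ≤ ‖st17c hna (f * g) (N + M)‖ * r ^ (N + M) :=
      mul_le_mul_of_nonneg_right hsum2 (pow_nonneg hr0.le _)
    have h9 : ‖st17c hna (f * g) (N + M)‖ * r ^ (N + M) ≤ u := by
      calc ‖st17c hna (f * g) (N + M)‖ * r ^ (N + M) ≤ u * 1 :=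
            mul_le_mul (hu (N + M)) (pow_le_one₀ hr0.le hr1.le) (pow_nonneg hr0.le _) hu0'
        _ = u := mul_one u
    linarith

end Primes

theorem statement17 (p : ℕ) [Fact p.Prime] (C : Type) [NontriviallyNormedField C]
    [IsAlgClosed C] [CharP C p] [CompleteSpace C]
    (hna : IsNonarchimedean (norm : C → ℝ)) :
    3 ≤ ringKrullDim (PowerSeries (OC C hna)) := by
  classical
  obtain ⟨x, hx⟩ := NormedField.exists_one_lt_norm C
  set ϖ : C := x⁻¹ with hϖ
  have hϖ0 : 0 < ‖ϖ‖ := by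
    rw [hϖ, norm_inv]
    have : 0 < ‖x‖ := by linarith
    positivity
  have hϖ1 : ‖ϖ‖ < 1 := by
    rw [hϖ, norm_inv]
    rw [inv_lt_one_iff₀]
    right; exact hx
  set w : ↥(OC C hna) := ⟨ϖ, hϖ1.le⟩ with hw
  -- witness for 0 < P1 : the constant series ϖ
  set f1 : PowerSeries ↥(OC C hna) := PowerSeries.C w with hf1
  have hc1 : ∀ n, st17c hna f1 n = if n = 0 then ϖ else 0 := by
    intro n
    unfold st17c
    rw [hf1, PowerSeries.coeff_C]
    split <;> simp [hw]
  have hf1P1 : f1 ∈ st17P1 hna := by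
    refine (st17_mem_P1 hna).mpr ⟨‖ϖ‖, hϖ0.le, hϖ1, fun n => ?_⟩
    rw [hc1 n]
    split <;> simp [hϖ0.le]
  have hf1ne : f1 ∉ (⊥ : Ideal (PowerSeries ↥(OC C hna))) := by
    rw [Ideal.mem_bot]
    intro h
    have := hc1 0
    rw [h, st17c_zero] at this
    simp at this
    rw [← this] at hϖ0
    simp at hϖ0
  -- witness for P1 < P2 : series of (n+1)-st roots of ϖ
  have hroot : ∀ n : ℕ, ∃ z : C, z ^ (n + 1) = ϖ := fun n =>
    IsAlgClosed.exists_pow_nat_eq ϖ (Nat.succ_pos n)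
  choose z hz using hroot
  have hzlt : ∀ n, ‖z n‖ < 1 := by
    intro n
    by_contra h
    push_neg at h
    have h1 : (1:ℝ) ≤ ‖z n‖ ^ (n + 1) := one_le_pow₀ h
    rw [← norm_pow, hz n] at h1
    linarith
  set f2 : PowerSeries ↥(OC C hna) :=
    PowerSeries.mk (fun n => (⟨z n, (hzlt n).le⟩ : ↥(OC C hna))) with hf2
  have hc2 : ∀ n, st17c hna f2 n = z n := by
    intro n
    unfold st17c
    rw [hf2, PowerSeries.coeff_mk]
  have hf2P2 : f2 ∈ st17P2 hna := by
    refine (st17_mem_P2 hna).mpr fun n => ?_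
    rw [hc2 n]; exact hzlt n
  have hf2P1 : f2 ∉ st17P1 hna := by
    rintro ⟨r, hr0, hr1, hr⟩
    have htends := tendsto_pow_atTop_nhds_zero_of_lt_one hr0 hr1
    obtain ⟨n, hn⟩ := Filter.eventually_atTop.mp (htends.eventually (gt_mem_nhds hϖ0))
    have h1 : r ^ (n + 1) < ‖ϖ‖ := hn (n + 1) (by omega)
    have hrn : ‖z n‖ ≤ r := by
      have := hr n
      rwa [hc2 n] at this
    have h2 : ‖ϖ‖ ≤ r ^ (n + 1) := by
      calc ‖ϖ‖ = ‖z n‖ ^ (n + 1) := by rw [← hz n, norm_pow]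
        _ ≤ r ^ (n + 1) := pow_le_pow_left₀ (norm_nonneg _) hrn _
    linarith
  -- witness for P2 < P3 : X
  have hXP3 : (PowerSeries.X : PowerSeries ↥(OC C hna)) ∈ st17P3 hna := by
    refine (st17_mem_P3 hna).mpr ?_
    have : st17c hna (PowerSeries.X : PowerSeries ↥(OC C hna)) 0 = 0 := by
      unfold st17c
      rw [PowerSeries.coeff_zero_X]
      simp
    rw [this]; simp
  have hXP2 : (PowerSeries.X : PowerSeries ↥(OC C hna)) ∉ st17P2 hna := by
    intro h
    have h1 := (st17_mem_P2 hna).mp h 1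
    have : st17c hna (PowerSeries.X : PowerSeries ↥(OC C hna)) 1 = 1 := by
      unfold st17c
      rw [PowerSeries.coeff_one_X]
      simp
    rw [this] at h1
    simp at h1
  -- inclusions
  have hle12 : st17P1 hna ≤ st17P2 hna := by
    rintro f ⟨r, hr0, hr1, hr⟩ n
    exact lt_of_le_of_lt (hr n) hr1
  have hle23 : st17P2 hna ≤ st17P3 hna := fun f hf => hf 0
  have h01 : (⊥ : Ideal (PowerSeries ↥(OC C hna))) < st17P1 hna :=
    SetLike.lt_iff_le_and_exists.mpr ⟨bot_le, f1, hf1P1, hf1ne⟩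
  have h12 : st17P1 hna < st17P2 hna :=
    SetLike.lt_iff_le_and_exists.mpr ⟨hle12, f2, hf2P2, hf2P1⟩
  have h23 : st17P2 hna < st17P3 hna :=
    SetLike.lt_iff_le_and_exists.mpr ⟨hle23, PowerSeries.X, hXP3, hXP2⟩
  -- the chain in the prime spectrum
  let q0 : PrimeSpectrum (PowerSeries ↥(OC C hna)) := ⟨⊥, Ideal.bot_prime⟩
  let q1 : PrimeSpectrum (PowerSeries ↥(OC C hna)) := ⟨st17P1 hna, st17P1_prime hna⟩
  let q2 : PrimeSpectrum (PowerSeries ↥(OC C hna)) := ⟨st17P2 hna, st17P2_prime hna⟩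
  let q3 : PrimeSpectrum (PowerSeries ↥(OC C hna)) := ⟨st17P3 hna, st17P3_prime hna⟩
  have hq01 : q0 < q1 := (PrimeSpectrum.asIdeal_lt_asIdeal _ _).mp h01
  have hq12 : q1 < q2 := (PrimeSpectrum.asIdeal_lt_asIdeal _ _).mp h12
  have hq23 : q2 < q3 := (PrimeSpectrum.asIdeal_lt_asIdeal _ _).mp h23
  let chain : LTSeries (PrimeSpectrum (PowerSeries ↥(OC C hna))) :=
    ⟨3, ![q0, q1, q2, q3], by
      intro i
      fin_cases i
      · exact hq01
      · exact hq12
      · exact hq23⟩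
  have hlen := Order.LTSeries.length_le_krullDim chain
  have : chain.length = 3 := rfl
  rw [this] at hlen
  exact_mod_cast hlen
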